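/- Let s ≥ 0. There exists a constant C = C(s) > 0 such that for all ε ∈ (0,1], all t ≥ 0, all real N ≥ 1, and all finitely supported sequences a, b : ℤ → ℂ, the sequence G defined by G_k = Σ_{k1+k2=k, k1≠0, k2≠0} k·exp(−i·t·Q1(k,k1,k2))/Q1(k,k1,k2)·a(k1)·b(k2), where Q1(k,k1,k2) = 3k·k1·k2 + iε(k² − k1² − k2²), satisfies (Σ_{|k|>N} (1+k²)^s e^{−2tεk²} |G_k|²)^{1/2} ≤ C·N^{−1}·‖(e^{−tεk²}a_k)_{k∈ℤ}‖_{H^s}·‖(e^{−tεk²}b_k)_{k∈ℤ}‖_{H^s}. -/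

import Mathlib

open scoped ENNReal
open MeasureTheory

/-- The `H^s` norm of a sequence indexed by `ℤ`, with values in `[0,∞]`. -/
noncomputable def HsE (s : ℝ) (a : ℤ → ℝ≥0∞) : ℝ≥0∞ :=
  (∑' k : ℤ, ENNReal.ofReal ((1 + (k : ℝ) ^ 2) ^ s) * a k ^ 2) ^ (1 / 2 : ℝ)

/-- `Q1(k, k1, k2) = 3 k k1 k2 + i ε (k² - k1² - k2²)`. -/
noncomputable def Q1 (ε : ℝ) (k k1 k2 : ℤ) : ℂ :=
  3 * (k : ℂ) * (k1 : ℂ) * (k2 : ℂ) +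
    Complex.I * (ε : ℂ) * ((k : ℂ) ^ 2 - (k1 : ℂ) ^ 2 - (k2 : ℂ) ^ 2)

/-! ### Auxiliary lemmas -/

lemma pow2_eq_rpow (x : ℝ≥0∞) : x ^ (2:ℕ) = x ^ (2:ℝ) := by
  rw [← ENNReal.rpow_natCast]; norm_num

lemma rpow_half_sq (x : ℝ≥0∞) : (x ^ (1/2:ℝ)) ^ (2:ℕ) = x := by
  rw [pow2_eq_rpow, ← ENNReal.rpow_mul]; norm_num

lemma sq_rpow_half (x : ℝ≥0∞) : (x ^ (2:ℕ)) ^ (1/2:ℝ) = x := by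
  rw [pow2_eq_rpow, ← ENNReal.rpow_mul]; norm_num

/-- Cauchy–Schwarz for tsums in `ℝ≥0∞`. -/
theorem my_cs (f g : ℤ → ℝ≥0∞) :
    (∑' k, f k * g k) ≤ (∑' k, f k ^ 2) ^ (1/2 : ℝ) * (∑' k, g k ^ 2) ^ (1/2 : ℝ) := by
  have hpq : Real.HolderConjugate 2 2 := .two_two
  have h := ENNReal.lintegral_mul_le_Lp_mul_Lq (Measure.count : Measure ℤ) hpq
    (measurable_of_countable f).aemeasurable (measurable_of_countable g).aemeasurable
  simp_rw [lintegral_count, Pi.mul_apply] at h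
  simp_rw [pow2_eq_rpow]
  exact h

/-- Minkowski for tsums in `ℝ≥0∞`. -/
theorem my_minkowski (f g : ℤ → ℝ≥0∞) :
    (∑' k, (f k + g k) ^ 2) ^ (1/2 : ℝ)
      ≤ (∑' k, f k ^ 2) ^ (1/2 : ℝ) + (∑' k, g k ^ 2) ^ (1/2 : ℝ) := by
  have h := ENNReal.lintegral_Lp_add_le
    (μ := (Measure.count : Measure ℤ))
    (measurable_of_countable f).aemeasurable (measurable_of_countable g).aemeasurable
    (p := 2) one_le_two
  simp_rw [lintegral_count, Pi.add_apply] at h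
  simp_rw [pow2_eq_rpow]
  exact h

/-- Young's inequality `ℓ¹ ⋆ ℓ² → ℓ²` for tsums in `ℝ≥0∞`. -/
theorem my_young (u v : ℤ → ℝ≥0∞) :
    (∑' k, (∑' j, u j * v (k - j)) ^ (2:ℕ)) ^ (1/2:ℝ)
      ≤ (∑' j, u j) * (∑' k, v k ^ (2:ℕ)) ^ (1/2:ℝ) := by
  have step1 : ∀ k : ℤ, (∑' j, u j * v (k - j)) ^ (2:ℕ)
      ≤ (∑' j, u j) * ∑' j, u j * v (k - j) ^ (2:ℕ) := by
    intro k
    have hcs := my_cs (fun j => u j ^ (1/2:ℝ)) (fun j => u j ^ (1/2:ℝ) * v (k - j))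
    have e1 : ∀ j : ℤ, u j ^ (1/2:ℝ) * (u j ^ (1/2:ℝ) * v (k - j)) = u j * v (k - j) := by
      intro j
      rw [← mul_assoc, ← ENNReal.rpow_add_of_nonneg _ _ (by norm_num) (by norm_num)]
      norm_num
    have e2 : ∀ j : ℤ, (u j ^ (1/2:ℝ)) ^ (2:ℕ) = u j := fun j => rpow_half_sq _
    have e3 : ∀ j : ℤ, (u j ^ (1/2:ℝ) * v (k - j)) ^ (2:ℕ) = u j * v (k - j) ^ (2:ℕ) := by
      intro j; rw [mul_pow, rpow_half_sq]
    simp_rw [e1, e2, e3] at hcs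
    calc (∑' j, u j * v (k - j)) ^ (2:ℕ)
        ≤ ((∑' j, u j) ^ (1/2:ℝ) * (∑' j, u j * v (k - j) ^ (2:ℕ)) ^ (1/2:ℝ)) ^ (2:ℕ) := by
          gcongr
      _ = (∑' j, u j) * ∑' j, u j * v (k - j) ^ (2:ℕ) := by
          rw [mul_pow, rpow_half_sq, rpow_half_sq]
  have step2 : (∑' k, ∑' j, u j * v (k - j) ^ (2:ℕ)) = (∑' j, u j) * ∑' k, v k ^ (2:ℕ) := by
    rw [ENNReal.tsum_comm]
    calc (∑' j, ∑' k, u j * v (k - j) ^ (2:ℕ))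
        = ∑' j, u j * ∑' k, v (k - j) ^ (2:ℕ) := by
          exact tsum_congr fun j => ENNReal.tsum_mul_left
      _ = ∑' j, u j * ∑' k, v k ^ (2:ℕ) := by
          refine tsum_congr fun j => ?_
          congr 1
          exact (Equiv.subRight j).tsum_eq (fun k => v k ^ (2:ℕ))
      _ = (∑' j, u j) * ∑' k, v k ^ (2:ℕ) := ENNReal.tsum_mul_right
  calc (∑' k, (∑' j, u j * v (k - j)) ^ (2:ℕ)) ^ (1/2:ℝ)
      ≤ (∑' k, (∑' j, u j) * ∑' j, u j * v (k - j) ^ (2:ℕ)) ^ (1/2:ℝ) := by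
        gcongr with k
        exact step1 k
    _ = ((∑' j, u j) * ((∑' j, u j) * ∑' k, v k ^ (2:ℕ))) ^ (1/2:ℝ) := by
        rw [ENNReal.tsum_mul_left, step2]
    _ = (((∑' j, u j) ^ (2:ℕ)) * ∑' k, v k ^ (2:ℕ)) ^ (1/2:ℝ) := by ring_nf
    _ = (∑' j, u j) * (∑' k, v k ^ (2:ℕ)) ^ (1/2:ℝ) := by
        rw [ENNReal.mul_rpow_of_nonneg _ _ (by norm_num), sq_rpow_half]

lemma conv_comm (u v : ℤ → ℝ≥0∞) (k : ℤ) :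
    ∑' j, u j * v (k - j) = ∑' j, v j * u (k - j) := by
  rw [← (Equiv.subLeft k).tsum_eq (fun j => u j * v (k - j))]
  refine tsum_congr fun j => ?_
  simp [Equiv.subLeft, mul_comm, sub_sub_cancel]

/-- The weight `(1+k²)^{s/2} e^{-tεk²} |c k|`. -/
noncomputable def wt (s t ε : ℝ) (c : ℤ → ℂ) (k : ℤ) : ℝ :=
  (1+(k:ℝ)^2)^(s/2) * (Real.exp (-(t*ε*(k:ℝ)^2)) * norm (c k))

lemma wt_nonneg (s t ε : ℝ) (c : ℤ → ℂ) (k : ℤ) : 0 ≤ wt s t ε c k := by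
  unfold wt; positivity

lemma weight_bound {s : ℝ} (hs : 0 ≤ s) (x y : ℝ) :
    (1+(x+y)^2)^(s/2) ≤ 2^(s/2) * ((1+x^2)^(s/2) * (1+y^2)^(s/2)) := by
  have h1 : (0:ℝ) ≤ 1+(x+y)^2 := by positivity
  have h2 : 1+(x+y)^2 ≤ 2 * ((1+x^2) * (1+y^2)) := by nlinarith [sq_nonneg (x-y), sq_nonneg (x*y)]
  calc (1+(x+y)^2)^(s/2) ≤ (2 * ((1+x^2) * (1+y^2)))^(s/2) :=
        Real.rpow_le_rpow h1 h2 (by positivity)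
    _ = 2^(s/2) * ((1+x^2)^(s/2) * (1+y^2)^(s/2)) := by
        rw [Real.mul_rpow (by norm_num) (by positivity),
          Real.mul_rpow (by positivity) (by positivity)]

lemma rec_bound {x y N : ℝ} (hx : 1 ≤ x) (hy : 1 ≤ y) (hN : 0 < N) (h : N ≤ x + y) :
    (x*y)⁻¹ ≤ 2 * N⁻¹ * (x⁻¹ + y⁻¹) := by
  have hx0 : (0:ℝ) < x := by linarith
  have hy0 : (0:ℝ) < y := by linarith
  have key : 1 ≤ 2 * N⁻¹ * (x + y) := by
    have h1 : 2 * N⁻¹ * N ≤ 2 * N⁻¹ * (x+y) := by gcongr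
    have h2 : 2 * N⁻¹ * N = 2 := by field_simp
    linarith [h2 ▸ h1]
  calc (x*y)⁻¹ = 1 * (x*y)⁻¹ := by ring
    _ ≤ (2 * N⁻¹ * (x+y)) * (x*y)⁻¹ := by gcongr
    _ = 2 * N⁻¹ * (x⁻¹ + y⁻¹) := by field_simp; ring

lemma Q1_abs_lb (ε : ℝ) (k k1 k2 : ℤ) :
    3 * |(k:ℝ)| * |(k1:ℝ)| * |(k2:ℝ)| ≤ norm (Q1 ε k k1 k2) := by
  have hre : (Q1 ε k k1 k2).re = 3 * (k:ℝ) * k1 * k2 := by simp [Q1, pow_two]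
  calc 3 * |(k:ℝ)| * |(k1:ℝ)| * |(k2:ℝ)| = |3 * (k:ℝ) * k1 * k2| := by
        rw [abs_mul, abs_mul, abs_mul]; norm_num
    _ = |(Q1 ε k k1 k2).re| := by rw [hre]
    _ ≤ norm (Q1 ε k k1 k2) := Complex.abs_re_le_norm _

lemma exp_re (ε t : ℝ) (k k1 k2 : ℤ) :
    norm (Complex.exp (-(Complex.I * (t:ℂ) * Q1 ε k k1 k2)))
      = Real.exp (t * ε * ((k:ℝ)^2 - (k1:ℝ)^2 - (k2:ℝ)^2)) := by
  rw [Complex.norm_exp]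
  congr 1
  simp [Q1, pow_two]
  ring

lemma term_bound (s ε t N : ℝ) (hs : 0 ≤ s) (hN : 1 ≤ N) (a b : ℤ → ℂ) (k k1 : ℤ)
    (hk : N < |(k:ℝ)|) :
    (1+(k:ℝ)^2)^(s/2) * Real.exp (-(t*ε*(k:ℝ)^2)) *
      norm (if k1 ≠ 0 ∧ k - k1 ≠ 0 then
        (k:ℂ) * Complex.exp (-(Complex.I*(t:ℂ)*Q1 ε k k1 (k-k1))) / Q1 ε k k1 (k-k1)
          * a k1 * b (k-k1) else 0)
    ≤ 2^(s/2) * (2/3) * N⁻¹ *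
      (wt s t ε a k1 * |(k1:ℝ)|⁻¹ * wt s t ε b (k-k1)
        + wt s t ε a k1 * (wt s t ε b (k-k1) * |((k-k1:ℤ):ℝ)|⁻¹)) := by
  have hN0 : (0:ℝ) < N := by linarith
  split_ifs with hcond
  case neg =>
    simp only [norm_zero, mul_zero]
    have h1 := wt_nonneg s t ε a k1
    have h2 := wt_nonneg s t ε b (k-k1)
    positivity
  obtain ⟨h1, h2⟩ := hcond
  set k2 : ℤ := k - k1 with hk2
  have habs1 : (1:ℝ) ≤ |(k1:ℝ)| := by
    have := Int.one_le_abs h1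
    calc (1:ℝ) = ((1:ℤ):ℝ) := by norm_num
      _ ≤ ((|k1|:ℤ):ℝ) := by exact_mod_cast this
      _ = |(k1:ℝ)| := by push_cast; ring
  have habs2 : (1:ℝ) ≤ |(k2:ℝ)| := by
    have := Int.one_le_abs h2
    calc (1:ℝ) = ((1:ℤ):ℝ) := by norm_num
      _ ≤ ((|k2|:ℤ):ℝ) := by exact_mod_cast this
      _ = |(k2:ℝ)| := by push_cast; ring
  have hkk : (k:ℝ) = (k1:ℝ) + (k2:ℝ) := by rw [hk2]; push_cast; ring
  have hsum : N ≤ |(k1:ℝ)| + |(k2:ℝ)| := by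
    have : |(k:ℝ)| ≤ |(k1:ℝ)| + |(k2:ℝ)| := hkk ▸ abs_add_le _ _
    linarith
  have hkpos : (0:ℝ) < |(k:ℝ)| := by linarith
  have hQ := Q1_abs_lb ε k k1 k2
  have hQpos : 0 < norm (Q1 ε k k1 k2) := by
    refine lt_of_lt_of_le ?_ hQ
    positivity
  have habsF : norm ((k:ℂ) * Complex.exp (-(Complex.I*(t:ℂ)*Q1 ε k k1 k2)) / Q1 ε k k1 k2
          * a k1 * b k2)
      = |(k:ℝ)| * Real.exp (t*ε*((k:ℝ)^2 - (k1:ℝ)^2 - (k2:ℝ)^2)) / norm (Q1 ε k k1 k2)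
          * norm (a k1) * norm (b k2) := by
    rw [norm_mul, norm_mul, norm_div, norm_mul, exp_re]
    congr 3
    rw [Complex.norm_intCast k]
  rw [habsF]
  have hexp : Real.exp (-(t*ε*(k:ℝ)^2)) * Real.exp (t*ε*((k:ℝ)^2 - (k1:ℝ)^2 - (k2:ℝ)^2))
      = Real.exp (-(t*ε*(k1:ℝ)^2)) * Real.exp (-(t*ε*(k2:ℝ)^2)) := by
    rw [← Real.exp_add, ← Real.exp_add]; congr 1; ring
  have hdiv : |(k:ℝ)| / norm (Q1 ε k k1 k2) ≤ 3⁻¹ * (|(k1:ℝ)| * |(k2:ℝ)|)⁻¹ := by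
    have step : |(k:ℝ)| / norm (Q1 ε k k1 k2)
        ≤ |(k:ℝ)| / (3 * |(k:ℝ)| * |(k1:ℝ)| * |(k2:ℝ)|) := by
      gcongr
    refine step.trans_eq ?_
    field_simp
  calc (1+(k:ℝ)^2)^(s/2) * Real.exp (-(t*ε*(k:ℝ)^2)) *
        (|(k:ℝ)| * Real.exp (t*ε*((k:ℝ)^2 - (k1:ℝ)^2 - (k2:ℝ)^2)) / norm (Q1 ε k k1 k2)
          * norm (a k1) * norm (b k2))
      = (1+(k:ℝ)^2)^(s/2) *
        ((Real.exp (-(t*ε*(k:ℝ)^2)) * Real.exp (t*ε*((k:ℝ)^2 - (k1:ℝ)^2 - (k2:ℝ)^2)))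
          * norm (a k1) * norm (b k2)) *
        (|(k:ℝ)| / norm (Q1 ε k k1 k2)) := by ring
    _ = (1+(k:ℝ)^2)^(s/2) *
        ((Real.exp (-(t*ε*(k1:ℝ)^2)) * norm (a k1))
          * (Real.exp (-(t*ε*(k2:ℝ)^2)) * norm (b k2))) *
        (|(k:ℝ)| / norm (Q1 ε k k1 k2)) := by rw [hexp]; ring_nf
    _ ≤ (2^(s/2) * ((1+(k1:ℝ)^2)^(s/2) * (1+(k2:ℝ)^2)^(s/2))) *
        ((Real.exp (-(t*ε*(k1:ℝ)^2)) * norm (a k1))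
          * (Real.exp (-(t*ε*(k2:ℝ)^2)) * norm (b k2))) *
        (3⁻¹ * (|(k1:ℝ)| * |(k2:ℝ)|)⁻¹) := by
        have hw : (1+(k:ℝ)^2)^(s/2) ≤ 2^(s/2) * ((1+(k1:ℝ)^2)^(s/2) * (1+(k2:ℝ)^2)^(s/2)) := by
          rw [hkk]; exact weight_bound hs _ _
        have hnn : (0:ℝ) ≤ (Real.exp (-(t*ε*(k1:ℝ)^2)) * norm (a k1))
          * (Real.exp (-(t*ε*(k2:ℝ)^2)) * norm (b k2)) := by positivity
        gcongr
    _ ≤ (2^(s/2) * ((1+(k1:ℝ)^2)^(s/2) * (1+(k2:ℝ)^2)^(s/2))) *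
        ((Real.exp (-(t*ε*(k1:ℝ)^2)) * norm (a k1))
          * (Real.exp (-(t*ε*(k2:ℝ)^2)) * norm (b k2))) *
        (3⁻¹ * (2 * N⁻¹ * (|(k1:ℝ)|⁻¹ + |(k2:ℝ)|⁻¹))) := by
        have hr := rec_bound habs1 habs2 hN0 hsum
        have hnn : (0:ℝ) ≤ (2^(s/2) * ((1+(k1:ℝ)^2)^(s/2) * (1+(k2:ℝ)^2)^(s/2))) *
          ((Real.exp (-(t*ε*(k1:ℝ)^2)) * norm (a k1))
            * (Real.exp (-(t*ε*(k2:ℝ)^2)) * norm (b k2))) := by positivity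
        gcongr
    _ = 2^(s/2) * (2/3) * N⁻¹ *
        (wt s t ε a k1 * |(k1:ℝ)|⁻¹ * wt s t ε b k2
          + wt s t ε a k1 * (wt s t ε b k2 * |(k2:ℝ)|⁻¹)) := by
        unfold wt; ring

theorem stmt10 (s : ℝ) (hs : 0 ≤ s) :
    ∃ C : ℝ, 0 < C ∧
      ∀ ε : ℝ, ε ∈ Set.Ioc (0 : ℝ) 1 → ∀ t : ℝ, 0 ≤ t → ∀ N : ℝ, 1 ≤ N →
        ∀ a b : ℤ → ℂ, (Function.support a).Finite → (Function.support b).Finite →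
          (∑' k : ℤ,
            if N < |(k : ℝ)| then
              ENNReal.ofReal ((1 + (k : ℝ) ^ 2) ^ s) *
                ENNReal.ofReal (Real.exp (-(2 * t * ε * (k : ℝ) ^ 2))) *
                ENNReal.ofReal (norm
                  (∑' k1 : ℤ,
                    if k1 ≠ 0 ∧ k - k1 ≠ 0 then
                      (k : ℂ) * Complex.exp (-(Complex.I * (t : ℂ) * Q1 ε k k1 (k - k1))) /
                          Q1 ε k k1 (k - k1) * a k1 * b (k - k1)
                    else 0)) ^ 2
            else 0) ^ (1 / 2 : ℝ)
          ≤ ENNReal.ofReal C * ENNReal.ofReal N⁻¹ *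
              HsE s (fun k =>
                ENNReal.ofReal (Real.exp (-(t * ε * (k : ℝ) ^ 2)) * norm (a k))) *
              HsE s (fun k =>
                ENNReal.ofReal (Real.exp (-(t * ε * (k : ℝ) ^ 2)) * norm (b k))) := by
  classical
  -- the constant
  have hZsum : Summable (fun k : ℤ => |(k:ℝ)|⁻¹ ^ 2) := by
    refine (Real.summable_one_div_int_pow.mpr (by norm_num : 1 < 2)).congr fun k => ?_
    rw [one_div, ← sq_abs, inv_pow]
  set Zr : ℝ := ∑' k : ℤ, |(k:ℝ)|⁻¹ ^ 2 with hZr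
  have hZr0 : 0 ≤ Zr := tsum_nonneg fun k => by positivity
  set Kr : ℝ := 2^(s/2) * (2/3) with hKr
  have hKr0 : 0 < Kr := by rw [hKr]; positivity
  refine ⟨Kr * 2 * (Zr^(1/2:ℝ) + 1), by positivity, ?_⟩
  rintro ε ⟨hε0, hε1⟩ t ht N hN a b ha hb
  have hN0 : (0:ℝ) < N := by linarith
  set Sa : Finset ℤ := ha.toFinset with hSa
  -- ENNReal-valued sequences
  set A' : ℤ → ℝ≥0∞ := fun k => ENNReal.ofReal (wt s t ε a k) with hA'
  set B' : ℤ → ℝ≥0∞ := fun k => ENNReal.ofReal (wt s t ε b k) with hB'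
  set U : ℤ → ℝ≥0∞ := fun k => ENNReal.ofReal (wt s t ε a k * |(k:ℝ)|⁻¹) with hU
  set X : ℤ → ℝ≥0∞ := fun k => ENNReal.ofReal (wt s t ε b k * |(k:ℝ)|⁻¹) with hX
  set cN : ℝ≥0∞ := ENNReal.ofReal Kr * ENNReal.ofReal N⁻¹ with hcN
  set F1 : ℤ → ℝ≥0∞ := fun k => ∑' j, U j * B' (k - j) with hF1
  set F2 : ℤ → ℝ≥0∞ := fun k => ∑' j, A' j * X (k - j) with hF2
  set G : ℤ → ℂ := fun k => ∑' k1 : ℤ,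
    if k1 ≠ 0 ∧ k - k1 ≠ 0 then
      (k : ℂ) * Complex.exp (-(Complex.I * (t : ℂ) * Q1 ε k k1 (k - k1))) /
        Q1 ε k k1 (k - k1) * a k1 * b (k - k1) else 0 with hG
  -- the real pointwise bound
  have hreal : ∀ k : ℤ, N < |(k:ℝ)| →
      (1+(k:ℝ)^2)^(s/2) * Real.exp (-(t*ε*(k:ℝ)^2)) * norm (G k)
        ≤ Kr * N⁻¹ * ∑ k1 ∈ Sa,
            (wt s t ε a k1 * |(k1:ℝ)|⁻¹ * wt s t ε b (k-k1)
              + wt s t ε a k1 * (wt s t ε b (k-k1) * |((k-k1:ℤ):ℝ)|⁻¹)) := by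
    intro k hk
    have hGsum : G k = ∑ k1 ∈ Sa, (if k1 ≠ 0 ∧ k - k1 ≠ 0 then
        (k : ℂ) * Complex.exp (-(Complex.I * (t : ℂ) * Q1 ε k k1 (k - k1))) /
          Q1 ε k k1 (k - k1) * a k1 * b (k - k1) else 0) := by
      refine tsum_eq_sum fun k1 hk1 => ?_
      have : a k1 = 0 := by
        by_contra hne
        exact hk1 (by simpa [hSa, Set.Finite.mem_toFinset, Function.mem_support] using hne)
      split_ifs <;> simp [this]
    have hrk : (0:ℝ) ≤ (1+(k:ℝ)^2)^(s/2) * Real.exp (-(t*ε*(k:ℝ)^2)) := by positivity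
    calc (1+(k:ℝ)^2)^(s/2) * Real.exp (-(t*ε*(k:ℝ)^2)) * norm (G k)
        ≤ (1+(k:ℝ)^2)^(s/2) * Real.exp (-(t*ε*(k:ℝ)^2)) *
            ∑ k1 ∈ Sa, norm (if k1 ≠ 0 ∧ k - k1 ≠ 0 then
              (k : ℂ) * Complex.exp (-(Complex.I * (t : ℂ) * Q1 ε k k1 (k - k1))) /
                Q1 ε k k1 (k - k1) * a k1 * b (k - k1) else 0) := by
          rw [hGsum]
          exact mul_le_mul_of_nonneg_left (norm_sum_le _ _) hrk
      _ = ∑ k1 ∈ Sa, (1+(k:ℝ)^2)^(s/2) * Real.exp (-(t*ε*(k:ℝ)^2)) *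
            norm (if k1 ≠ 0 ∧ k - k1 ≠ 0 then
              (k : ℂ) * Complex.exp (-(Complex.I * (t : ℂ) * Q1 ε k k1 (k - k1))) /
                Q1 ε k k1 (k - k1) * a k1 * b (k - k1) else 0) := by
          rw [Finset.mul_sum]
      _ ≤ ∑ k1 ∈ Sa, 2^(s/2) * (2/3) * N⁻¹ *
            (wt s t ε a k1 * |(k1:ℝ)|⁻¹ * wt s t ε b (k-k1)
              + wt s t ε a k1 * (wt s t ε b (k-k1) * |((k-k1:ℤ):ℝ)|⁻¹)) := by
          refine Finset.sum_le_sum fun k1 _ => ?_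
          exact term_bound s ε t N hs hN a b k k1 hk
      _ = Kr * N⁻¹ * ∑ k1 ∈ Sa,
            (wt s t ε a k1 * |(k1:ℝ)|⁻¹ * wt s t ε b (k-k1)
              + wt s t ε a k1 * (wt s t ε b (k-k1) * |((k-k1:ℤ):ℝ)|⁻¹)) := by
          rw [← Finset.mul_sum, hKr]
  -- pointwise bound in ℝ≥0∞
  have hpoint : ∀ k : ℤ,
      (if N < |(k : ℝ)| then
        ENNReal.ofReal ((1 + (k : ℝ) ^ 2) ^ s) *
          ENNReal.ofReal (Real.exp (-(2 * t * ε * (k : ℝ) ^ 2))) *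
          ENNReal.ofReal (norm (G k)) ^ 2
      else 0) ≤ (cN * (F1 k + F2 k)) ^ (2:ℕ) := by
    intro k
    split_ifs with hk
    case neg => exact zero_le
    have e1 : ENNReal.ofReal ((1+(k:ℝ)^2)^s)
        = (ENNReal.ofReal ((1+(k:ℝ)^2)^(s/2)))^(2:ℕ) := by
      rw [← ENNReal.ofReal_pow (by positivity)]
      congr 1
      rw [← Real.rpow_natCast ((1+(k:ℝ)^2)^(s/2)) 2, ← Real.rpow_mul (by positivity)]
      norm_num
    have e2 : ENNReal.ofReal (Real.exp (-(2*t*ε*(k:ℝ)^2)))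
        = (ENNReal.ofReal (Real.exp (-(t*ε*(k:ℝ)^2))))^(2:ℕ) := by
      rw [← ENNReal.ofReal_pow (Real.exp_nonneg _)]
      congr 1
      conv_rhs => rw [pow_two, ← Real.exp_add]
      congr 1
      ring
    rw [e1, e2, ← mul_pow, ← mul_pow]
    have hmono : ENNReal.ofReal ((1+(k:ℝ)^2)^(s/2)) * ENNReal.ofReal (Real.exp (-(t*ε*(k:ℝ)^2)))
        * ENNReal.ofReal (norm (G k)) ≤ cN * (F1 k + F2 k) := by
      rw [← ENNReal.ofReal_mul (by positivity), ← ENNReal.ofReal_mul (by positivity)]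
      calc ENNReal.ofReal ((1+(k:ℝ)^2)^(s/2) * Real.exp (-(t*ε*(k:ℝ)^2)) * norm (G k))
          ≤ ENNReal.ofReal (Kr * N⁻¹ * ∑ k1 ∈ Sa,
              (wt s t ε a k1 * |(k1:ℝ)|⁻¹ * wt s t ε b (k-k1)
                + wt s t ε a k1 * (wt s t ε b (k-k1) * |((k-k1:ℤ):ℝ)|⁻¹))) :=
            ENNReal.ofReal_le_ofReal (hreal k hk)
        _ = cN * ENNReal.ofReal (∑ k1 ∈ Sa,
              (wt s t ε a k1 * |(k1:ℝ)|⁻¹ * wt s t ε b (k-k1)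
                + wt s t ε a k1 * (wt s t ε b (k-k1) * |((k-k1:ℤ):ℝ)|⁻¹))) := by
            rw [hcN, ENNReal.ofReal_mul (by positivity), ENNReal.ofReal_mul hKr0.le]
        _ = cN * ∑ k1 ∈ Sa, (U k1 * B' (k-k1) + A' k1 * X (k-k1)) := by
            congr 1
            rw [ENNReal.ofReal_sum_of_nonneg]
            · refine Finset.sum_congr rfl fun k1 _ => ?_
              have h1 := wt_nonneg s t ε a k1
              have h2 := wt_nonneg s t ε b (k-k1)
              rw [ENNReal.ofReal_add (by positivity) (by positivity)]
              congr 1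
              · rw [hU, hB', ← ENNReal.ofReal_mul (by positivity)]
              · rw [hA', hX, ← ENNReal.ofReal_mul h1]
            · intro k1 _
              have h1 := wt_nonneg s t ε a k1
              have h2 := wt_nonneg s t ε b (k-k1)
              positivity
        _ ≤ cN * (F1 k + F2 k) := by
            gcongr
            rw [hF1, hF2, ← ENNReal.tsum_add]
            exact ENNReal.sum_le_tsum Sa
    exact pow_le_pow_left' hmono 2
  -- norms
  set normA : ℝ≥0∞ := (∑' k, A' k ^ (2:ℕ)) ^ (1/2:ℝ) with hnA
  set normB : ℝ≥0∞ := (∑' k, B' k ^ (2:ℕ)) ^ (1/2:ℝ) with hnB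
  set Z : ℝ≥0∞ := ENNReal.ofReal (Zr ^ (1/2:ℝ)) with hZ
  have hZeq : (∑' j : ℤ, (ENNReal.ofReal |(j:ℝ)|⁻¹) ^ (2:ℕ)) ^ (1/2:ℝ) = Z := by
    have h1 : (∑' j : ℤ, (ENNReal.ofReal |(j:ℝ)|⁻¹) ^ (2:ℕ)) = ENNReal.ofReal Zr := by
      rw [hZr, ENNReal.ofReal_tsum_of_nonneg (fun j => by positivity) hZsum]
      exact tsum_congr fun j => (ENNReal.ofReal_pow (p := |(j:ℝ)|⁻¹) (by positivity) 2).symm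
    rw [h1, hZ, ← ENNReal.ofReal_rpow_of_nonneg hZr0 (by norm_num)]
  have hUle : (∑' j, U j) ≤ normA * Z := by
    have hrw : ∀ j : ℤ, U j = A' j * ENNReal.ofReal |(j:ℝ)|⁻¹ := by
      intro j
      simp only [hU, hA']
      rw [ENNReal.ofReal_mul (wt_nonneg s t ε a j)]
    calc (∑' j, U j) = ∑' j, A' j * ENNReal.ofReal |(j:ℝ)|⁻¹ := tsum_congr hrw
      _ ≤ (∑' j, A' j ^ 2) ^ (1/2:ℝ) * (∑' j : ℤ, (ENNReal.ofReal |(j:ℝ)|⁻¹) ^ 2) ^ (1/2:ℝ) :=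
          my_cs _ _
      _ = normA * Z := by rw [hZeq, hnA]
  have hXle : (∑' j, X j) ≤ normB * Z := by
    have hrw : ∀ j : ℤ, X j = B' j * ENNReal.ofReal |(j:ℝ)|⁻¹ := by
      intro j
      simp only [hX, hB']
      rw [ENNReal.ofReal_mul (wt_nonneg s t ε b j)]
    calc (∑' j, X j) = ∑' j, B' j * ENNReal.ofReal |(j:ℝ)|⁻¹ := tsum_congr hrw
      _ ≤ (∑' j, B' j ^ 2) ^ (1/2:ℝ) * (∑' j : ℤ, (ENNReal.ofReal |(j:ℝ)|⁻¹) ^ 2) ^ (1/2:ℝ) :=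
          my_cs _ _
      _ = normB * Z := by rw [hZeq, hnB]
  have hnormA : normA = HsE s (fun k =>
      ENNReal.ofReal (Real.exp (-(t * ε * (k : ℝ) ^ 2)) * norm (a k))) := by
    rw [hnA, HsE]
    congr 1
    refine tsum_congr fun k => ?_
    simp only [hA']
    show (ENNReal.ofReal (wt s t ε a k)) ^ (2:ℕ) = _
    rw [← ENNReal.ofReal_pow (wt_nonneg s t ε a k)]
    unfold wt
    rw [mul_pow]
    have hh : ((1+(k:ℝ)^2)^(s/2))^(2:ℕ) = (1+(k:ℝ)^2)^s := by
      rw [← Real.rpow_natCast ((1+(k:ℝ)^2)^(s/2)) 2, ← Real.rpow_mul (by positivity)]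
      norm_num
    rw [hh, ENNReal.ofReal_mul (by positivity),
      ENNReal.ofReal_pow (by positivity)]
  have hnormB : normB = HsE s (fun k =>
      ENNReal.ofReal (Real.exp (-(t * ε * (k : ℝ) ^ 2)) * norm (b k))) := by
    rw [hnB, HsE]
    congr 1
    refine tsum_congr fun k => ?_
    simp only [hB']
    show (ENNReal.ofReal (wt s t ε b k)) ^ (2:ℕ) = _
    rw [← ENNReal.ofReal_pow (wt_nonneg s t ε b k)]
    unfold wt
    rw [mul_pow]
    have hh : ((1+(k:ℝ)^2)^(s/2))^(2:ℕ) = (1+(k:ℝ)^2)^s := by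
      rw [← Real.rpow_natCast ((1+(k:ℝ)^2)^(s/2)) 2, ← Real.rpow_mul (by positivity)]
      norm_num
    rw [hh, ENNReal.ofReal_mul (by positivity),
      ENNReal.ofReal_pow (by positivity)]
  -- final chain
  calc (∑' k : ℤ,
          if N < |(k : ℝ)| then
            ENNReal.ofReal ((1 + (k : ℝ) ^ 2) ^ s) *
              ENNReal.ofReal (Real.exp (-(2 * t * ε * (k : ℝ) ^ 2))) *
              ENNReal.ofReal (norm
                (∑' k1 : ℤ,
                  if k1 ≠ 0 ∧ k - k1 ≠ 0 then
                    (k : ℂ) * Complex.exp (-(Complex.I * (t : ℂ) * Q1 ε k k1 (k - k1))) /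
                        Q1 ε k k1 (k - k1) * a k1 * b (k - k1)
                  else 0)) ^ 2
          else 0) ^ (1 / 2 : ℝ)
      ≤ (∑' k : ℤ, (cN * (F1 k + F2 k)) ^ (2:ℕ)) ^ (1/2:ℝ) := by
        gcongr with k
        exact hpoint k
    _ = cN * (∑' k : ℤ, (F1 k + F2 k) ^ (2:ℕ)) ^ (1/2:ℝ) := by
        simp_rw [mul_pow]
        rw [ENNReal.tsum_mul_left, ENNReal.mul_rpow_of_nonneg _ _ (by norm_num), sq_rpow_half]
    _ ≤ cN * ((∑' k, F1 k ^ (2:ℕ)) ^ (1/2:ℝ) + (∑' k, F2 k ^ (2:ℕ)) ^ (1/2:ℝ)) := by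
        gcongr
        exact my_minkowski F1 F2
    _ ≤ cN * ((∑' j, U j) * normB + (∑' j, X j) * normA) := by
        gcongr
        · rw [hnB]
          exact my_young U B'
        · rw [hnA]
          have hc : ∀ k, F2 k = ∑' j, X j * A' (k - j) := fun k => conv_comm A' X k
          calc (∑' k, F2 k ^ (2:ℕ)) ^ (1/2:ℝ)
              = (∑' k, (∑' j, X j * A' (k - j)) ^ (2:ℕ)) ^ (1/2:ℝ) := by simp_rw [hc]
            _ ≤ (∑' j, X j) * (∑' k, A' k ^ (2:ℕ)) ^ (1/2:ℝ) := my_young X A'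
    _ ≤ cN * ((normA * Z) * normB + (normB * Z) * normA) := by gcongr
    _ = (ENNReal.ofReal Kr * (2 * Z)) * ENNReal.ofReal N⁻¹ * (normA * normB) := by
        rw [hcN]; ring
    _ ≤ ENNReal.ofReal (Kr * 2 * (Zr^(1/2:ℝ) + 1)) * ENNReal.ofReal N⁻¹ * (normA * normB) := by
        refine mul_le_mul_left (mul_le_mul_left ?_ _) _
        rw [hZ]
        calc ENNReal.ofReal Kr * (2 * ENNReal.ofReal (Zr ^ (1/2:ℝ)))
            = ENNReal.ofReal (Kr * (2 * Zr ^ (1/2:ℝ))) := by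
              rw [ENNReal.ofReal_mul (p := Kr) hKr0.le,
                ENNReal.ofReal_mul (p := (2:ℝ)) (by norm_num),
                ENNReal.ofReal_ofNat]
          _ ≤ ENNReal.ofReal (Kr * 2 * (Zr^(1/2:ℝ) + 1)) := by
              refine ENNReal.ofReal_le_ofReal ?_
              have h0 : (0:ℝ) ≤ Zr ^ (1/2:ℝ) := Real.rpow_nonneg hZr0 _
              nlinarith [hKr0.le]
    _ = ENNReal.ofReal (Kr * 2 * (Zr^(1/2:ℝ) + 1)) * ENNReal.ofReal N⁻¹ *
          HsE s (fun k =>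
            ENNReal.ofReal (Real.exp (-(t * ε * (k : ℝ) ^ 2)) * norm (a k))) *
          HsE s (fun k =>
            ENNReal.ofReal (Real.exp (-(t * ε * (k : ℝ) ^ 2)) * norm (b k))) := by
        rw [← hnormA, ← hnormB]; ring
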